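/- Let 𝒳 and 𝒴 be finite sets, W a Markov kernel from 𝒳 to 𝒴 (a row-stochastic matrix W(x,y) ≥ 0 with Σ_y W(x,y) = 1), and P_X a probability distribution on 𝒳 with full support such that P_Y := P_X W also has full support. Suppose ŝ : ℝ_{≥0} → ℝ_{≥0} is concave and non-decreasing and satisfies D(QW || P_Y) ≤ ŝ(D(Q || P_X)) for every probability distribution Q on 𝒳. Then for every n ≥ 1 and every probability distribution Q_{X^n} on 𝒳^n, D(Q_{X^n} W^{⊗n} || P_Y^{⊗n}) ≤ n·ŝ( (1/n)·D(Q_{X^n} || P_X^{⊗n}) ), where W^{⊗n} is the product channel (W^{⊗n})((x_1,…,x_n),(y_1,…,y_n)) = Π_i W(x_i,y_i) and P^{⊗n} denotes the n-fold product distribution. -/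

import Mathlib

open scoped BigOperators
open Finset

lemma aux_sub_le_mul_log {p q : ℝ} (hp : 0 ≤ p) (hq : 0 < q) :
    p - q ≤ p * Real.log (p / q) := by
  rcases eq_or_lt_of_le hp with h | h
  · simp [← h, hq.le]
  · have h1 : Real.log (q / p) ≤ q / p - 1 := Real.log_le_sub_one_of_pos (by positivity)
    have h2 : Real.log (q / p) = Real.log q - Real.log p := Real.log_div hq.ne' h.ne'
    have h3 : Real.log (p / q) = Real.log p - Real.log q := Real.log_div h.ne' hq.ne'
    rw [h3]
    have h5 : p * Real.log (q / p) ≤ p * (q / p - 1) := by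
      exact mul_le_mul_of_nonneg_left h1 h.le
    have h6 : p * (q / p - 1) = q - p := by field_simp
    nlinarith [h5]

-- log-sum inequality, positive version
lemma aux_log_sum_pos {ι : Type*} (t : Finset ι) (a b : ι → ℝ)
    (ha : ∀ i ∈ t, 0 ≤ a i) (hb : ∀ i ∈ t, 0 < b i) :
    (∑ i ∈ t, a i) * Real.log ((∑ i ∈ t, a i) / (∑ i ∈ t, b i)) ≤
      ∑ i ∈ t, a i * Real.log (a i / b i) := by
  set A := ∑ i ∈ t, a i with hA
  set B := ∑ i ∈ t, b i with hB
  have hA0 : 0 ≤ A := Finset.sum_nonneg ha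
  rcases eq_or_lt_of_le hA0 with h | hApos
  · have hz : ∀ i ∈ t, a i = 0 := by
      exact (Finset.sum_eq_zero_iff_of_nonneg ha).mp h.symm
    have : ∑ i ∈ t, a i * Real.log (a i / b i) = 0 :=
      Finset.sum_eq_zero fun i hi => by rw [hz i hi]; ring
    rw [this, ← h]; ring_nf; simp
  · have htne : t.Nonempty := by
      by_contra hne
      rw [Finset.not_nonempty_iff_eq_empty] at hne
      simp [hA, hne] at hApos
    have hBpos : 0 < B := Finset.sum_pos hb htne
    have hc : 0 < A / B := by positivity
    have key : ∀ i ∈ t, a i - b i * (A / B) ≤ a i * Real.log (a i / b i) - a i * Real.log (A / B) := by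
      intro i hi
      have hbi := mul_pos (hb i hi) hc
      have h1 : a i - b i * (A / B) ≤ a i * Real.log (a i / (b i * (A / B))) :=
        aux_sub_le_mul_log (ha i hi) hbi
      rcases eq_or_lt_of_le (ha i hi) with h0 | h0
      · simp only [← h0]; simpa using hbi.le
      · have : Real.log (a i / (b i * (A / B))) = Real.log (a i / b i) - Real.log (A / B) := by
          rw [show a i / (b i * (A / B)) = (a i / b i) / (A / B) by
            field_simp]
          exact Real.log_div (div_pos h0 (hb i hi)).ne' (ne_of_gt hc)
        rw [this] at h1; linarith [h1]
    have hsum := Finset.sum_le_sum key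
    rw [Finset.sum_sub_distrib, Finset.sum_sub_distrib, ← Finset.sum_mul, ← Finset.sum_mul] at hsum
    have e2 : B * (A / B) = A := by field_simp
    rw [e2] at hsum
    linarith

-- log-sum inequality, allowing b i = 0 provided a i = 0 then
lemma aux_log_sum {ι : Type*} (t : Finset ι) (a b : ι → ℝ)
    (ha : ∀ i ∈ t, 0 ≤ a i) (hb : ∀ i ∈ t, 0 ≤ b i)
    (hab : ∀ i ∈ t, b i = 0 → a i = 0) :
    (∑ i ∈ t, a i) * Real.log ((∑ i ∈ t, a i) / (∑ i ∈ t, b i)) ≤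
      ∑ i ∈ t, a i * Real.log (a i / b i) := by
  classical
  set t' := t.filter (fun i => 0 < b i) with ht'
  have hsub : t' ⊆ t := Finset.filter_subset _ _
  have hza : ∀ i ∈ t, i ∉ t' → a i = 0 := by
    intro i hi hni
    apply hab i hi
    have := hb i hi
    rcases eq_or_lt_of_le this with h | h
    · exact h.symm
    · exact absurd (Finset.mem_filter.mpr ⟨hi, h⟩) hni
  have ea : ∑ i ∈ t, a i = ∑ i ∈ t', a i :=
    (Finset.sum_subset hsub (fun i hi hni => hza i hi hni)).symm
  have eb : ∑ i ∈ t, b i = ∑ i ∈ t', b i := by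
    refine (Finset.sum_subset hsub ?_).symm
    intro i hi hni
    rcases eq_or_lt_of_le (hb i hi) with h | h
    · exact h.symm
    · exact absurd (Finset.mem_filter.mpr ⟨hi, h⟩) hni
  have et : ∑ i ∈ t, a i * Real.log (a i / b i) = ∑ i ∈ t', a i * Real.log (a i / b i) := by
    refine (Finset.sum_subset hsub ?_).symm
    intro i hi hni
    rw [hza i hi hni]; ring
  rw [ea, eb, et]
  exact aux_log_sum_pos t' a b (fun i hi => ha i (hsub hi))
    (fun i hi => (Finset.mem_filter.mp hi).2)

lemma aux_kl_nonneg {α : Type*} [Fintype α] (p q : α → ℝ)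
    (hp : ∀ a, 0 ≤ p a) (hq : ∀ a, 0 < q a) (hs : ∑ a, q a ≤ ∑ a, p a) :
    0 ≤ ∑ a, p a * Real.log (p a / q a) := by
  have h := Finset.sum_le_sum (fun a (_ : a ∈ Finset.univ) => aux_sub_le_mul_log (hp a) (hq a))
  rw [Finset.sum_sub_distrib] at h
  linarith

lemma aux_chain {A B : Type*} [Fintype A] [Fintype B] (Q : A → B → ℝ)
    (hQ : ∀ a b, 0 ≤ Q a b) (PA : A → ℝ) (hPA : ∀ a, 0 < PA a)
    (PB : B → ℝ) (hPB : ∀ b, 0 < PB b) :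
    ∑ a, ∑ b, Q a b * Real.log (Q a b / (PA a * PB b)) =
      (∑ a, (∑ b, Q a b) * Real.log ((∑ b, Q a b) / PA a)) +
        ∑ a, ∑ b, Q a b * Real.log (Q a b / ((∑ b', Q a b') * PB b)) := by
  rw [← Finset.sum_add_distrib]
  refine Finset.sum_congr rfl (fun a _ => ?_)
  set M := ∑ b', Q a b' with hM
  have hM0 : 0 ≤ M := Finset.sum_nonneg (fun b _ => hQ a b)
  rcases eq_or_lt_of_le hM0 with h | h
  · have hz : ∀ b, Q a b = 0 := fun b =>
      (Finset.sum_eq_zero_iff_of_nonneg (fun b _ => hQ a b)).mp h.symm b (Finset.mem_univ b)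
    simp [hz, ← h]
  · have key : ∀ b, Q a b * Real.log (Q a b / (PA a * PB b)) =
        Q a b * Real.log (M / PA a) + Q a b * Real.log (Q a b / (M * PB b)) := by
      intro b
      rcases eq_or_lt_of_le (hQ a b) with h0 | h0
      · simp [← h0]
      · have e : Q a b / (PA a * PB b) = (M / PA a) * (Q a b / (M * PB b)) := by
          rw [div_mul_div_comm, show PA a * (M * PB b) = M * (PA a * PB b) by ring,
            mul_div_mul_left _ _ h.ne']
        rw [e, Real.log_mul (div_pos h (hPA a)).ne' (div_pos h0 (mul_pos h (hPB b))).ne',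
          mul_add]
    rw [Finset.sum_congr rfl (fun b _ => key b), Finset.sum_add_distrib, ← Finset.sum_mul]

lemma aux_cond_nonneg {A B : Type*} [Fintype A] [Fintype B] (Q : A → B → ℝ)
    (hQ : ∀ a b, 0 ≤ Q a b) (PB : B → ℝ) (hPB : ∀ b, 0 < PB b) (hPBs : ∑ b, PB b = 1) :
    0 ≤ ∑ a, ∑ b, Q a b * Real.log (Q a b / ((∑ b', Q a b') * PB b)) := by
  refine Finset.sum_nonneg (fun a _ => ?_)
  set M := ∑ b', Q a b' with hM
  have hM0 : 0 ≤ M := Finset.sum_nonneg (fun b _ => hQ a b)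
  rcases eq_or_lt_of_le hM0 with h | h
  · have hz : ∀ b, Q a b = 0 := fun b =>
      (Finset.sum_eq_zero_iff_of_nonneg (fun b _ => hQ a b)).mp h.symm b (Finset.mem_univ b)
    simp [hz]
  · have key := Finset.sum_le_sum (fun b (_ : b ∈ Finset.univ) =>
      aux_sub_le_mul_log (p := Q a b) (q := M * PB b) (hQ a b) (mul_pos h (hPB b)))
    rw [Finset.sum_sub_distrib, ← Finset.mul_sum, hPBs, mul_one] at key
    linarith [key, hM]

lemma aux_kl_convex {ι B : Type*} [Fintype B] (t : Finset ι) (w : ι → ℝ) (p : ι → B → ℝ)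
    (r : B → ℝ) (hw : ∀ i ∈ t, 0 ≤ w i) (hp : ∀ i ∈ t, ∀ b, 0 ≤ p i b)
    (hr : ∀ b, 0 < r b) (hws : ∑ i ∈ t, w i = 1) :
    ∑ b, (∑ i ∈ t, w i * p i b) * Real.log ((∑ i ∈ t, w i * p i b) / r b) ≤
      ∑ i ∈ t, w i * ∑ b, p i b * Real.log (p i b / r b) := by
  have key : ∀ b, (∑ i ∈ t, w i * p i b) * Real.log ((∑ i ∈ t, w i * p i b) / r b) ≤
      ∑ i ∈ t, w i * (p i b * Real.log (p i b / r b)) := by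
    intro b
    have h1 := aux_log_sum t (fun i => w i * p i b) (fun i => w i * r b)
      (fun i hi => mul_nonneg (hw i hi) (hp i hi b))
      (fun i hi => mul_nonneg (hw i hi) (hr b).le)
      (fun i hi hz => by
        have hz' : w i * r b = 0 := hz
        have hwz : w i = 0 := by
          rcases mul_eq_zero.mp hz' with h | h
          · exact h
          · exact absurd h (hr b).ne'
        show w i * p i b = 0
        rw [hwz, zero_mul])
    have e1 : ∑ i ∈ t, w i * r b = r b := by rw [← Finset.sum_mul, hws, one_mul]
    have e2 : ∀ i ∈ t, (w i * p i b) * Real.log ((w i * p i b) / (w i * r b)) =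
        w i * (p i b * Real.log (p i b / r b)) := by
      intro i hi
      rcases eq_or_lt_of_le (hw i hi) with h0 | h0
      · simp [← h0]
      · rw [mul_div_mul_left _ _ h0.ne']; ring
    rw [e1] at h1
    calc (∑ i ∈ t, w i * p i b) * Real.log ((∑ i ∈ t, w i * p i b) / r b)
        ≤ ∑ i ∈ t, (w i * p i b) * Real.log ((w i * p i b) / (w i * r b)) := h1
      _ = ∑ i ∈ t, w i * (p i b * Real.log (p i b / r b)) := Finset.sum_congr rfl e2
  calc ∑ b, (∑ i ∈ t, w i * p i b) * Real.log ((∑ i ∈ t, w i * p i b) / r b)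
      ≤ ∑ b, ∑ i ∈ t, w i * (p i b * Real.log (p i b / r b)) :=
        Finset.sum_le_sum (fun b _ => key b)
    _ = ∑ i ∈ t, w i * ∑ b, p i b * Real.log (p i b / r b) := by
        rw [Finset.sum_comm]
        exact Finset.sum_congr rfl (fun i _ => by rw [Finset.mul_sum])

lemma aux_step {X1 Y1 X2 Y2 : Type*} [Fintype X1] [Fintype Y1] [Fintype X2] [Fintype Y2]
    (W1 : X1 → Y1 → ℝ) (hW10 : ∀ x y, 0 ≤ W1 x y) (hW11 : ∀ x, ∑ y, W1 x y = 1)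
    (P1 : X1 → ℝ) (hP1 : ∀ x, 0 < P1 x) (hP1s : ∑ x, P1 x = 1)
    (PY1 : Y1 → ℝ) (hPY1 : ∀ y, 0 < PY1 y)
    (W2 : X2 → Y2 → ℝ) (hW20 : ∀ x y, 0 ≤ W2 x y) (hW21 : ∀ x, ∑ y, W2 x y = 1)
    (P2 : X2 → ℝ) (hP2 : ∀ x, 0 < P2 x) (hP2s : ∑ x, P2 x = 1)
    (PY2 : Y2 → ℝ) (hPY2 : ∀ y, 0 < PY2 y)
    (f s : ℝ → ℝ)
    (hconc : ConcaveOn ℝ (Set.Ici 0) s) (hmono : MonotoneOn s (Set.Ici 0))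
    (hf : ∀ Q : X1 → ℝ, (∀ x, 0 ≤ Q x) → (∑ x, Q x = 1) →
      (∑ y, (∑ x, Q x * W1 x y) * Real.log ((∑ x, Q x * W1 x y) / PY1 y)) ≤
        f (∑ x, Q x * Real.log (Q x / P1 x)))
    (hs : ∀ Q : X2 → ℝ, (∀ x, 0 ≤ Q x) → (∑ x, Q x = 1) →
      (∑ y, (∑ x, Q x * W2 x y) * Real.log ((∑ x, Q x * W2 x y) / PY2 y)) ≤
        s (∑ x, Q x * Real.log (Q x / P2 x)))
    (Q : X1 → X2 → ℝ) (hQ0 : ∀ x1 x2, 0 ≤ Q x1 x2) (hQs : ∑ x1, ∑ x2, Q x1 x2 = 1) :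
    ∃ a b : ℝ, 0 ≤ a ∧ 0 ≤ b ∧
      a + b = ∑ x1, ∑ x2, Q x1 x2 * Real.log (Q x1 x2 / (P1 x1 * P2 x2)) ∧
      (∑ y1, ∑ y2, (∑ x1, ∑ x2, Q x1 x2 * (W1 x1 y1 * W2 x2 y2)) *
          Real.log ((∑ x1, ∑ x2, Q x1 x2 * (W1 x1 y1 * W2 x2 y2)) / (PY1 y1 * PY2 y2)))
        ≤ f a + s b := by
  classical
  set Q1 : X1 → ℝ := fun x1 => ∑ x2, Q x1 x2 with hQ1def
  have hQ10 : ∀ x1, 0 ≤ Q1 x1 := fun x1 => Finset.sum_nonneg fun x2 _ => hQ0 x1 x2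
  have hQ1s : ∑ x1, Q1 x1 = 1 := hQs
  set a : ℝ := ∑ x1, Q1 x1 * Real.log (Q1 x1 / P1 x1) with hadef
  set b : ℝ := ∑ x1, ∑ x2, Q x1 x2 * Real.log (Q x1 x2 / ((∑ x2', Q x1 x2') * P2 x2)) with hbdef
  -- the conditional divergences
  set d : X1 → ℝ := fun x1 => ∑ x2, (Q x1 x2 / Q1 x1) * Real.log ((Q x1 x2 / Q1 x1) / P2 x2)
    with hddef
  have hd0 : ∀ x1, 0 ≤ d x1 := by
    intro x1
    rcases eq_or_lt_of_le (hQ10 x1) with h | h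
    · have hz : ∀ x2, Q x1 x2 = 0 := fun x2 =>
        (Finset.sum_eq_zero_iff_of_nonneg (fun x2 _ => hQ0 x1 x2)).mp h.symm x2 (mem_univ x2)
      simp [hddef, hz]
    · refine aux_kl_nonneg _ P2 (fun x2 => div_nonneg (hQ0 x1 x2) (hQ10 x1)) hP2 ?_
      rw [← Finset.sum_div]
      rw [hP2s, div_self h.ne']
  -- Q1 x1 * d x1 recovers the conditional divergence terms
  have hQ1d : ∀ x1, Q1 x1 * d x1 = ∑ x2, Q x1 x2 * Real.log (Q x1 x2 / (Q1 x1 * P2 x2)) := by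
    intro x1
    rcases eq_or_lt_of_le (hQ10 x1) with h | h
    · have hz : ∀ x2, Q x1 x2 = 0 := fun x2 =>
        (Finset.sum_eq_zero_iff_of_nonneg (fun x2 _ => hQ0 x1 x2)).mp h.symm x2 (mem_univ x2)
      simp [hz, ← h]
    · rw [hddef, Finset.mul_sum]
      refine Finset.sum_congr rfl fun x2 _ => ?_
      have hc : Q1 x1 * (Q x1 x2 / Q1 x1) = Q x1 x2 := by field_simp
      rw [div_div, ← mul_assoc, hc]
  have hbd : b = ∑ x1, Q1 x1 * d x1 := by
    rw [hbdef]
    exact Finset.sum_congr rfl fun x1 _ => (hQ1d x1).symm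
  refine ⟨a, b, ?_, ?_, ?_, ?_⟩
  · exact aux_kl_nonneg Q1 P1 hQ10 hP1 (by rw [hP1s, hQ1s])
  · exact aux_cond_nonneg Q hQ0 P2 hP2 hP2s
  · rw [hadef, hbdef, ← aux_chain Q hQ0 P1 hP1 P2 hP2]
  -- the main inequality
  set S : Y1 → Y2 → ℝ := fun y1 y2 => ∑ x1, ∑ x2, Q x1 x2 * (W1 x1 y1 * W2 x2 y2) with hSdef
  set S1 : Y1 → ℝ := fun y1 => ∑ x1, Q1 x1 * W1 x1 y1 with hS1def
  set T : Y1 → X2 → ℝ := fun y1 x2 => ∑ x1, Q x1 x2 * W1 x1 y1 with hTdef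
  have hS0 : ∀ y1 y2, 0 ≤ S y1 y2 := fun y1 y2 =>
    Finset.sum_nonneg fun x1 _ => Finset.sum_nonneg fun x2 _ =>
      mul_nonneg (hQ0 x1 x2) (mul_nonneg (hW10 x1 y1) (hW20 x2 y2))
  have hT0 : ∀ y1 x2, 0 ≤ T y1 x2 := fun y1 x2 =>
    Finset.sum_nonneg fun x1 _ => mul_nonneg (hQ0 x1 x2) (hW10 x1 y1)
  have hS10 : ∀ y1, 0 ≤ S1 y1 := fun y1 =>
    Finset.sum_nonneg fun x1 _ => mul_nonneg (hQ10 x1) (hW10 x1 y1)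
  have hF2 : ∀ y1 y2, S y1 y2 = ∑ x2, T y1 x2 * W2 x2 y2 := by
    intro y1 y2
    rw [hSdef, hTdef]
    simp only
    rw [Finset.sum_comm]
    exact Finset.sum_congr rfl fun x2 _ => by
      rw [Finset.sum_mul]
      exact Finset.sum_congr rfl fun x1 _ => by ring
  have hF3 : ∀ y1, ∑ x2, T y1 x2 = S1 y1 := by
    intro y1
    rw [hTdef, hS1def]
    simp only
    rw [Finset.sum_comm]
    exact Finset.sum_congr rfl fun x1 _ => by rw [← Finset.sum_mul]
  have hF1 : ∀ y1, ∑ y2, S y1 y2 = S1 y1 := by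
    intro y1
    have : ∀ y2, S y1 y2 = ∑ x2, T y1 x2 * W2 x2 y2 := hF2 y1
    rw [Finset.sum_congr rfl fun y2 _ => this y2, Finset.sum_comm]
    rw [← hF3 y1]
    exact Finset.sum_congr rfl fun x2 _ => by
      rw [← Finset.mul_sum, hW21, mul_one]
  have hS1s : ∑ y1, S1 y1 = 1 := by
    rw [hS1def]
    simp only
    rw [Finset.sum_comm]
    calc ∑ x1, ∑ y1, Q1 x1 * W1 x1 y1 = ∑ x1, Q1 x1 := by
          refine Finset.sum_congr rfl fun x1 _ => ?_
          rw [← Finset.mul_sum, hW11, mul_one]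
      _ = 1 := hQ1s
  -- E-values
  set E : Y1 → ℝ := fun y1 => if 0 < S1 y1 then ∑ x1, (Q1 x1 * W1 x1 y1 / S1 y1) * d x1 else 0
    with hEdef
  have hE0 : ∀ y1, 0 ≤ E y1 := by
    intro y1
    rw [hEdef]
    simp only
    split
    · exact Finset.sum_nonneg fun x1 _ =>
        mul_nonneg (div_nonneg (mul_nonneg (hQ10 x1) (hW10 x1 y1)) (hS10 y1)) (hd0 x1)
    · exact le_refl 0
  -- key per-y1 inequality
  have hkey : ∀ y1, (∑ y2, S y1 y2 * Real.log (S y1 y2 / ((∑ y2', S y1 y2') * PY2 y2)))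
      ≤ S1 y1 * s (E y1) := by
    intro y1
    rcases eq_or_lt_of_le (hS10 y1) with h | h
    · have hz : ∀ y2, S y1 y2 = 0 := by
        intro y2
        have := hF1 y1
        rw [← h] at this
        exact (Finset.sum_eq_zero_iff_of_nonneg (fun y2 _ => hS0 y1 y2)).mp this y2 (mem_univ y2)
      rw [← h]
      simp [hz]
    · -- S1 y1 > 0
      set w : X2 → ℝ := fun x2 => T y1 x2 / S1 y1 with hwdef
      have hw0 : ∀ x2, 0 ≤ w x2 := fun x2 => div_nonneg (hT0 y1 x2) (hS10 y1)
      have hws : ∑ x2, w x2 = 1 := by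
        rw [hwdef]
        simp only
        rw [← Finset.sum_div, hF3 y1, div_self h.ne']
      -- conditional output distribution
      have hv : ∀ y2, (∑ x2, w x2 * W2 x2 y2) = S y1 y2 / S1 y1 := by
        intro y2
        rw [hF2 y1 y2, Finset.sum_div]
        exact Finset.sum_congr rfl fun x2 _ => by simp only [hwdef]; ring
      -- rewrite inner sum
      have hinner : (∑ y2, S y1 y2 * Real.log (S y1 y2 / ((∑ y2', S y1 y2') * PY2 y2)))
          = S1 y1 * ∑ y2, (∑ x2, w x2 * W2 x2 y2) *
              Real.log ((∑ x2, w x2 * W2 x2 y2) / PY2 y2) := by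
        rw [Finset.mul_sum]
        refine Finset.sum_congr rfl fun y2 _ => ?_
        rw [hv y2, hF1 y1, div_div]
        have hc : S1 y1 * (S y1 y2 / S1 y1) = S y1 y2 := by field_simp
        rw [← mul_assoc, hc]
      rw [hinner]
      -- apply SDPI for W2
      have hsd := hs w hw0 hws
      -- apply convexity of KL
      have hconv := aux_kl_convex (Finset.univ : Finset X1)
        (fun x1 => Q1 x1 * W1 x1 y1 / S1 y1) (fun x1 x2 => Q x1 x2 / Q1 x1) P2
        (fun x1 _ => div_nonneg (mul_nonneg (hQ10 x1) (hW10 x1 y1)) (hS10 y1))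
        (fun x1 _ x2 => div_nonneg (hQ0 x1 x2) (hQ10 x1)) hP2
        (by
          show (∑ x1, Q1 x1 * W1 x1 y1 / S1 y1) = 1
          rw [← Finset.sum_div]
          exact div_self h.ne')
      -- the mixture is w
      have hmix : ∀ x2, (∑ x1, (Q1 x1 * W1 x1 y1 / S1 y1) * (Q x1 x2 / Q1 x1)) = w x2 := by
        intro x2
        have hw' : w x2 = ∑ x1, Q x1 x2 * W1 x1 y1 / S1 y1 := by
          simp only [hwdef, hTdef]
          rw [Finset.sum_div]
        rw [hw']
        refine Finset.sum_congr rfl fun x1 _ => ?_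
        rcases eq_or_lt_of_le (hQ10 x1) with h0 | h0
        · have hz : Q x1 x2 = 0 :=
            (Finset.sum_eq_zero_iff_of_nonneg (fun x2 _ => hQ0 x1 x2)).mp h0.symm x2 (mem_univ x2)
          rw [hz, ← h0]
          simp
        · field_simp
      rw [Finset.sum_congr rfl (fun x2 _ => by rw [hmix x2])] at hconv
      have hEy : E y1 = ∑ x1, (Q1 x1 * W1 x1 y1 / S1 y1) * d x1 := by
        rw [hEdef]; simp only [if_pos h]
      have hklw_mem : (∑ x2, w x2 * Real.log (w x2 / P2 x2)) ∈ Set.Ici (0:ℝ) :=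
        aux_kl_nonneg w P2 hw0 hP2 (by rw [hP2s, hws])
      have hE_mem : E y1 ∈ Set.Ici (0:ℝ) := hE0 y1
      have hmono' : s (∑ x2, w x2 * Real.log (w x2 / P2 x2)) ≤ s (E y1) := by
        refine hmono hklw_mem hE_mem ?_
        rw [hEy]
        exact hconv
      have : (∑ y2, (∑ x2, w x2 * W2 x2 y2) * Real.log ((∑ x2, w x2 * W2 x2 y2) / PY2 y2))
          ≤ s (E y1) := le_trans hsd hmono'
      exact mul_le_mul_of_nonneg_left this (hS10 y1)
  -- Jensen over y1
  have hjensen : ∑ y1, S1 y1 * s (E y1) ≤ s (∑ y1, S1 y1 * E y1) := by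
    have := hconc.le_map_sum (t := Finset.univ) (w := S1) (p := E)
      (fun y1 _ => hS10 y1) hS1s (fun y1 _ => hE0 y1)
    simpa [smul_eq_mul] using this
  -- identify the Jensen argument with b
  have hSE : ∑ y1, S1 y1 * E y1 = b := by
    have h1 : ∀ y1, S1 y1 * E y1 = ∑ x1, Q1 x1 * W1 x1 y1 * d x1 := by
      intro y1
      rcases eq_or_lt_of_le (hS10 y1) with h | h
      · have hz : ∀ x1, Q1 x1 * W1 x1 y1 = 0 := by
          intro x1
          have : ∑ x1, Q1 x1 * W1 x1 y1 = 0 := h.symm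
          exact (Finset.sum_eq_zero_iff_of_nonneg
            (fun x1 _ => mul_nonneg (hQ10 x1) (hW10 x1 y1))).mp this x1 (mem_univ x1)
        rw [← h, zero_mul]
        exact (Finset.sum_eq_zero fun x1 _ => by rw [hz x1, zero_mul]).symm
      · rw [hEdef]
        simp only [if_pos h]
        rw [Finset.mul_sum]
        refine Finset.sum_congr rfl fun x1 _ => ?_
        field_simp
    rw [Finset.sum_congr rfl fun y1 _ => h1 y1, Finset.sum_comm, hbd]
    refine Finset.sum_congr rfl fun x1 _ => ?_
    calc ∑ y1, Q1 x1 * W1 x1 y1 * d x1 = Q1 x1 * d x1 * ∑ y1, W1 x1 y1 := by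
          rw [Finset.mul_sum]
          exact Finset.sum_congr rfl fun y1 _ => by ring
      _ = Q1 x1 * d x1 := by rw [hW11, mul_one]
  -- assemble via output chain rule
  have hout := aux_chain S hS0 PY1 hPY1 PY2 hPY2
  have hterm1 : (∑ y1, (∑ y2, S y1 y2) * Real.log ((∑ y2, S y1 y2) / PY1 y1)) ≤ f a := by
    have := hf Q1 hQ10 hQ1s
    have he : ∀ y1, (∑ y2, S y1 y2) = ∑ x1, Q1 x1 * W1 x1 y1 := fun y1 => hF1 y1
    calc (∑ y1, (∑ y2, S y1 y2) * Real.log ((∑ y2, S y1 y2) / PY1 y1))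
        = ∑ y1, (∑ x1, Q1 x1 * W1 x1 y1) * Real.log ((∑ x1, Q1 x1 * W1 x1 y1) / PY1 y1) :=
          Finset.sum_congr rfl fun y1 _ => by rw [he y1]
      _ ≤ f a := this
  have hterm2 : (∑ y1, ∑ y2, S y1 y2 * Real.log (S y1 y2 / ((∑ y2', S y1 y2') * PY2 y2)))
      ≤ s b := by
    calc (∑ y1, ∑ y2, S y1 y2 * Real.log (S y1 y2 / ((∑ y2', S y1 y2') * PY2 y2)))
        ≤ ∑ y1, S1 y1 * s (E y1) := Finset.sum_le_sum fun y1 _ => hkey y1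
      _ ≤ s (∑ y1, S1 y1 * E y1) := hjensen
      _ = s b := by rw [hSE]
  calc (∑ y1, ∑ y2, S y1 y2 * Real.log (S y1 y2 / (PY1 y1 * PY2 y2)))
      = (∑ y1, (∑ y2, S y1 y2) * Real.log ((∑ y2, S y1 y2) / PY1 y1)) +
          ∑ y1, ∑ y2, S y1 y2 * Real.log (S y1 y2 / ((∑ y2', S y1 y2') * PY2 y2)) := hout
    _ ≤ f a + s b := add_le_add hterm1 hterm2

section AuxCombine

lemma aux_prod_sum {ι κ : Type*} [Fintype ι] [Fintype κ] [DecidableEq ι] (g : ι → κ → ℝ) :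
    ∑ f : ι → κ, ∏ i, g i (f i) = ∏ i, ∑ j, g i j := by
  rw [Finset.prod_univ_sum, Fintype.piFinset_univ]

lemma aux_combine {s : ℝ → ℝ} (hconc : ConcaveOn ℝ (Set.Ici 0) s) {m : ℝ} (hm : 1 ≤ m)
    {a b : ℝ} (ha : 0 ≤ a) (hb : 0 ≤ b) :
    m * s (1 / m * a) + s b ≤ (m + 1) * s (1 / (m + 1) * (a + b)) := by
  have hm0 : 0 < m := lt_of_lt_of_le one_pos hm
  have hm1 : (0:ℝ) < m + 1 := by linarith
  have h1 : (0:ℝ) ≤ m / (m + 1) := by positivity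
  have h2 : (0:ℝ) ≤ 1 / (m + 1) := by positivity
  have h3 : m / (m + 1) + 1 / (m + 1) = 1 := by field_simp
  have hx : (1 / m * a) ∈ Set.Ici (0:ℝ) := Set.mem_Ici.mpr (by positivity)
  have hy : b ∈ Set.Ici (0:ℝ) := Set.mem_Ici.mpr hb
  have hj := hconc.2 hx hy h1 h2 h3
  rw [smul_eq_mul, smul_eq_mul, smul_eq_mul, smul_eq_mul] at hj
  have harg : m / (m + 1) * (1 / m * a) + 1 / (m + 1) * b = 1 / (m + 1) * (a + b) := by
    field_simp
  rw [harg] at hj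
  have hj2 := mul_le_mul_of_nonneg_left hj hm1.le
  calc m * s (1 / m * a) + s b
      = (m + 1) * (m / (m + 1) * s (1 / m * a) + 1 / (m + 1) * s b) := by
        field_simp
    _ ≤ (m + 1) * s (1 / (m + 1) * (a + b)) := hj2

end AuxCombine

set_option maxHeartbeats 1000000 in
theorem nonlinear_sdpi_tensorization {X Y : Type*} [Fintype X] [Fintype Y]
    (W : X → Y → ℝ) (hW0 : ∀ x y, 0 ≤ W x y) (hW1 : ∀ x, ∑ y, W x y = 1)
    (PX : X → ℝ) (hPX0 : ∀ x, 0 < PX x) (hPX1 : ∑ x, PX x = 1)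
    (hPY : ∀ y, 0 < ∑ x, PX x * W x y)
    (s : ℝ → ℝ) (hconc : ConcaveOn ℝ (Set.Ici 0) s) (hmono : MonotoneOn s (Set.Ici 0))
    (hs0 : ∀ u : ℝ, 0 ≤ u → 0 ≤ s u)
    (hsdpi : ∀ Q : X → ℝ, (∀ x, 0 ≤ Q x) → (∑ x, Q x = 1) →
      (∑ y, (∑ x, Q x * W x y) * Real.log ((∑ x, Q x * W x y) / (∑ x, PX x * W x y)))
        ≤ s (∑ x, Q x * Real.log (Q x / PX x)))
    (n : ℕ) (hn : 1 ≤ n)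
    (Qn : (Fin n → X) → ℝ) (hQn0 : ∀ xs, 0 ≤ Qn xs) (hQn1 : ∑ xs, Qn xs = 1) :
    (∑ ys : Fin n → Y,
        (∑ xs : Fin n → X, Qn xs * ∏ i, W (xs i) (ys i)) *
          Real.log ((∑ xs : Fin n → X, Qn xs * ∏ i, W (xs i) (ys i))
            / (∏ i, ∑ x, PX x * W x (ys i))))
      ≤ (n : ℝ) * s ((1 / (n : ℝ)) *
          ∑ xs : Fin n → X, Qn xs * Real.log (Qn xs / ∏ i, PX (xs i))) := by
  classical
  induction n, hn using Nat.le_induction with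
  | base =>
    have hX1 : ∀ (G : (Fin 1 → X) → ℝ), ∑ f : Fin 1 → X, G f = ∑ x : X, G (fun _ => x) := by
      intro G
      exact Fintype.sum_equiv (Equiv.funUnique (Fin 1) X).symm (fun x => G (fun _ => x)) G
        (fun x => by congr) |>.symm
    have hY1 : ∀ (G : (Fin 1 → Y) → ℝ), ∑ f : Fin 1 → Y, G f = ∑ y : Y, G (fun _ => y) := by
      intro G
      exact Fintype.sum_equiv (Equiv.funUnique (Fin 1) Y).symm (fun y => G (fun _ => y)) G
        (fun y => by congr) |>.symm
    have hQ'0 : ∀ x, 0 ≤ Qn (fun _ => x) := fun x => hQn0 _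
    have hQ'1 : ∑ x : X, Qn (fun _ => x) = 1 := by rw [← hX1 Qn]; exact hQn1
    have hkey := hsdpi (fun x => Qn (fun _ => x)) hQ'0 hQ'1
    have hin : ∀ y : Y, (∑ xs : Fin 1 → X, Qn xs * ∏ i, W (xs i) y)
        = ∑ x : X, Qn (fun _ => x) * W x y := by
      intro y
      rw [hX1 (fun xs => Qn xs * ∏ i, W (xs i) y)]
      exact Finset.sum_congr rfl fun x _ => by rw [Fin.prod_univ_one]
    calc (∑ ys : Fin 1 → Y,
            (∑ xs : Fin 1 → X, Qn xs * ∏ i, W (xs i) (ys i)) *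
              Real.log ((∑ xs : Fin 1 → X, Qn xs * ∏ i, W (xs i) (ys i))
                / (∏ i, ∑ x, PX x * W x (ys i))))
        = ∑ y : Y, (∑ x, Qn (fun _ => x) * W x y) *
            Real.log ((∑ x, Qn (fun _ => x) * W x y) / (∑ x, PX x * W x y)) := by
          rw [hY1]
          refine Finset.sum_congr rfl fun y _ => ?_
          rw [show (∑ xs : Fin 1 → X, Qn xs * ∏ i : Fin 1, W (xs i) ((fun _ => y) i))
              = ∑ x, Qn (fun _ => x) * W x y from hin y, Fin.prod_univ_one]
      _ ≤ s (∑ x, Qn (fun _ => x) * Real.log (Qn (fun _ => x) / PX x)) := hkey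
      _ = (1 : ℝ) * s ((1 / (1:ℝ)) *
            ∑ xs : Fin 1 → X, Qn xs * Real.log (Qn xs / ∏ i, PX (xs i))) := by
          rw [hX1 (fun xs => Qn xs * Real.log (Qn xs / ∏ i, PX (xs i)))]
          simp [Fin.prod_univ_one]
      _ = ((1:ℕ) : ℝ) * s ((1 / ((1:ℕ) : ℝ)) *
            ∑ xs : Fin 1 → X, Qn xs * Real.log (Qn xs / ∏ i, PX (xs i))) := by norm_num
  | succ m hm ih =>
    have eXsum : ∀ (G : (Fin (m+1) → X) → ℝ),
        ∑ f : Fin (m+1) → X, G f = ∑ xs : Fin m → X, ∑ x : X, G (Fin.snoc xs x) := by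
      intro G
      refine (Fintype.sum_equiv ((Equiv.prodComm (Fin m → X) X).trans
        (Fin.snocEquiv fun _ => X)) (fun p => G (Fin.snoc p.1 p.2)) G (fun p => rfl)).symm.trans ?_
      exact Fintype.sum_prod_type _
    have eYsum : ∀ (G : (Fin (m+1) → Y) → ℝ),
        ∑ f : Fin (m+1) → Y, G f = ∑ ys : Fin m → Y, ∑ y : Y, G (Fin.snoc ys y) := by
      intro G
      refine (Fintype.sum_equiv ((Equiv.prodComm (Fin m → Y) Y).trans
        (Fin.snocEquiv fun _ => Y)) (fun p => G (Fin.snoc p.1 p.2)) G (fun p => rfl)).symm.trans ?_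
      exact Fintype.sum_prod_type _
    have hprodW : ∀ (xs : Fin m → X) (x : X) (ys : Fin m → Y) (y : Y),
        (∏ i : Fin (m+1), W ((Fin.snoc xs x : Fin (m+1) → X) i) ((Fin.snoc ys y : Fin (m+1) → Y) i)) = (∏ i, W (xs i) (ys i)) * W x y := by
      intro xs x ys y
      rw [Fin.prod_univ_castSucc]
      simp
    have hprodP : ∀ (xs : Fin m → X) (x : X),
        (∏ i : Fin (m+1), PX ((Fin.snoc xs x : Fin (m+1) → X) i)) = (∏ i, PX (xs i)) * PX x := by
      intro xs x
      rw [Fin.prod_univ_castSucc]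
      simp
    have hprodPY : ∀ (ys : Fin m → Y) (y : Y),
        (∏ i : Fin (m+1), ∑ x, PX x * W x ((Fin.snoc ys y : Fin (m+1) → Y) i)) =
          (∏ i, ∑ x, PX x * W x (ys i)) * (∑ x, PX x * W x y) := by
      intro ys y
      rw [Fin.prod_univ_castSucc]
      simp
    -- the product-system data
    have hW11' : ∀ xs : Fin m → X, ∑ ys : Fin m → Y, ∏ i, W (xs i) (ys i) = 1 := by
      intro xs
      rw [aux_prod_sum (fun i y => W (xs i) y)]
      simp [hW1]
    have hP1' : ∀ xs : Fin m → X, 0 < ∏ i, PX (xs i) :=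
      fun xs => Finset.prod_pos fun i _ => hPX0 _
    have hP1s' : ∑ xs : Fin m → X, ∏ i, PX (xs i) = 1 := by
      rw [aux_prod_sum (fun _ x => PX x)]
      simp [hPX1]
    have hPY1' : ∀ ys : Fin m → Y, 0 < ∏ i, ∑ x, PX x * W x (ys i) :=
      fun ys => Finset.prod_pos fun i _ => hPY _
    obtain ⟨a, b, ha, hb, hab, hineq⟩ :=
      aux_step (X1 := Fin m → X) (Y1 := Fin m → Y) (X2 := X) (Y2 := Y)
        (fun xs ys => ∏ i, W (xs i) (ys i))
        (fun xs ys => Finset.prod_nonneg fun i _ => hW0 _ _) hW11'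
        (fun xs => ∏ i, PX (xs i)) hP1' hP1s'
        (fun ys => ∏ i, ∑ x, PX x * W x (ys i)) hPY1'
        W hW0 hW1 PX hPX0 hPX1 (fun y => ∑ x, PX x * W x y) hPY
        (fun u => (m:ℝ) * s (1/(m:ℝ) * u)) s hconc hmono
        (fun Q hQ0' hQ1' => ih Q hQ0' hQ1') hsdpi
        (fun xs x => Qn (Fin.snoc xs x))
        (fun xs x => hQn0 _)
        (by rw [← eXsum Qn]; exact hQn1)
    have hDin : (∑ xs : Fin (m+1) → X, Qn xs * Real.log (Qn xs / ∏ i, PX (xs i))) = a + b := by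
      rw [eXsum (fun f => Qn f * Real.log (Qn f / ∏ i, PX (f i))), hab]
      refine Finset.sum_congr rfl fun xs _ => Finset.sum_congr rfl fun x _ => ?_
      rw [hprodP xs x]
    have hLout : (∑ ys : Fin (m+1) → Y,
          (∑ xs : Fin (m+1) → X, Qn xs * ∏ i, W (xs i) (ys i)) *
            Real.log ((∑ xs : Fin (m+1) → X, Qn xs * ∏ i, W (xs i) (ys i))
              / (∏ i, ∑ x, PX x * W x (ys i))))
        = ∑ ys : Fin m → Y, ∑ y : Y,
            (∑ xs : Fin m → X, ∑ x : X, Qn (Fin.snoc xs x) * ((∏ i, W (xs i) (ys i)) * W x y)) *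
              Real.log ((∑ xs : Fin m → X, ∑ x : X,
                  Qn (Fin.snoc xs x) * ((∏ i, W (xs i) (ys i)) * W x y))
                / ((∏ i, ∑ x, PX x * W x (ys i)) * (∑ x, PX x * W x y))) := by
      rw [eYsum (fun g => (∑ xs : Fin (m+1) → X, Qn xs * ∏ i, W (xs i) (g i)) *
        Real.log ((∑ xs : Fin (m+1) → X, Qn xs * ∏ i, W (xs i) (g i))
          / (∏ i, ∑ x, PX x * W x (g i))))]
      refine Finset.sum_congr rfl fun ys _ => Finset.sum_congr rfl fun y _ => ?_
      have hnum : (∑ f : Fin (m+1) → X, Qn f * ∏ i, W (f i) ((Fin.snoc ys y : Fin (m+1) → Y) i))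
          = ∑ xs : Fin m → X, ∑ x : X,
              Qn (Fin.snoc xs x) * ((∏ i, W (xs i) (ys i)) * W x y) := by
        rw [eXsum (fun f => Qn f * ∏ i, W (f i) ((Fin.snoc ys y : Fin (m+1) → Y) i))]
        refine Finset.sum_congr rfl fun xs _ => Finset.sum_congr rfl fun x _ => ?_
        rw [hprodW xs x ys y]
      rw [hnum, hprodPY ys y]
    rw [hLout, hDin]
    calc (∑ ys : Fin m → Y, ∑ y : Y,
            (∑ xs : Fin m → X, ∑ x : X, Qn (Fin.snoc xs x) * ((∏ i, W (xs i) (ys i)) * W x y)) *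
              Real.log ((∑ xs : Fin m → X, ∑ x : X,
                  Qn (Fin.snoc xs x) * ((∏ i, W (xs i) (ys i)) * W x y))
                / ((∏ i, ∑ x, PX x * W x (ys i)) * (∑ x, PX x * W x y))))
        ≤ (m:ℝ) * s (1/(m:ℝ) * a) + s b := hineq
      _ ≤ ((m:ℝ) + 1) * s (1 / ((m:ℝ) + 1) * (a + b)) :=
          aux_combine hconc (by exact_mod_cast hm) ha hb
      _ = ((m + 1 : ℕ) : ℝ) * s (1 / ((m + 1 : ℕ) : ℝ) * (a + b)) := by norm_cast
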